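/- Let f be a homeomorphism of the torus isotopic to the identity with no periodic points, and let F: R^2 → R^2 be a lift of f. Then for every closed topological disk D ⊂ R^2, every integer N ≠ 0 and every (p,q) ∈ Z^2, neither F^N(D) ⊆ T_{p,q}(D) nor T_{p,q}(D) ⊆ F^N(D) holds, where T_{p,q}(x,y) = (x+p, y+q). -/

import Mathlib

open Complex Set Metric

/-- A continuous function on `[0,1]` whose exponential is constantly `1` is constant. -/
lemma exp_eq_one_const {u : ℝ → ℂ} (hu : ContinuousOn u (Icc 0 1))
    (h : ∀ t ∈ Icc 0 1, Complex.exp (u t) = 1) : u 1 = u 0 := by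
  have hform : ∀ t ∈ Icc (0:ℝ) 1, ∃ n : ℤ, u t = ((2 * Real.pi * n : ℝ) : ℂ) * I := by
    intro t ht
    obtain ⟨n, hn⟩ := Complex.exp_eq_one_iff.mp (h t ht)
    exact ⟨n, by rw [hn]; push_cast; ring⟩
  set k : ℝ → ℝ := fun t => (u t).im with hk
  have hkc : ContinuousOn k (Icc 0 1) := Complex.continuous_im.comp_continuousOn hu
  have hre : ∀ t ∈ Icc (0:ℝ) 1, (u t).re = 0 := by
    intro t ht
    obtain ⟨n, hn⟩ := hform t ht
    simp [hn]
  have hint : ∀ t ∈ Icc (0:ℝ) 1, ∃ n : ℤ, k t = 2 * Real.pi * n := by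
    intro t ht
    obtain ⟨n, hn⟩ := hform t ht
    exact ⟨n, by simp [hk, hn]⟩
  have h0 : (0:ℝ) ∈ Icc (0:ℝ) 1 := by constructor <;> norm_num
  have h1 : (1:ℝ) ∈ Icc (0:ℝ) 1 := by constructor <;> norm_num
  have hkk : k 1 = k 0 := by
    by_contra hne
    obtain ⟨n0, hn0⟩ := hint 0 h0
    obtain ⟨n1, hn1⟩ := hint 1 h1
    have hpi := Real.pi_pos
    have hnn : n0 ≠ n1 := by
      intro hEq; apply hne; rw [hn0, hn1, hEq]
    -- the value min + π is attained, contradiction with integrality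
    have hgap : min (k 0) (k 1) + Real.pi ≤ max (k 0) (k 1) := by
      rcases le_total n0 n1 with hle | hle
      · have : n0 + 1 ≤ n1 := by omega
        have : (n0 : ℝ) + 1 ≤ (n1 : ℝ) := by exact_mod_cast this
        have hmin : min (k 0) (k 1) = k 0 := by
          rw [min_eq_left]; rw [hn0, hn1]; nlinarith
        have hmax : max (k 0) (k 1) = k 1 := by
          rw [max_eq_right]; rw [hn0, hn1]; nlinarith
        rw [hmin, hmax, hn0, hn1]; nlinarith
      · have : n1 + 1 ≤ n0 := by omega
        have : (n1 : ℝ) + 1 ≤ (n0 : ℝ) := by exact_mod_cast this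
        have hmin : min (k 0) (k 1) = k 1 := by
          rw [min_eq_right]; rw [hn0, hn1]; nlinarith
        have hmax : max (k 0) (k 1) = k 0 := by
          rw [max_eq_left]; rw [hn0, hn1]; nlinarith
        rw [hmin, hmax, hn0, hn1]; nlinarith
    have hmem : min (k 0) (k 1) + Real.pi ∈ Icc (min (k 0) (k 1)) (max (k 0) (k 1)) :=
      ⟨by linarith, hgap⟩
    have := intermediate_value_uIcc (a := (0:ℝ)) (b := 1)
      (f := k) (by rwa [uIcc_of_le (by norm_num : (0:ℝ) ≤ 1)])
    have hmem' : min (k 0) (k 1) + Real.pi ∈ k '' uIcc (0:ℝ) 1 := by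
      apply this
      rw [Set.uIcc]; exact hmem
    obtain ⟨t, ht, htv⟩ := hmem'
    rw [uIcc_of_le (by norm_num : (0:ℝ) ≤ 1)] at ht
    obtain ⟨m, hm⟩ := hint t ht
    -- k t = 2πm and k t = min + π = 2π·(n) + π : parity contradiction
    rcases le_total (k 0) (k 1) with hle | hle
    · rw [min_eq_left hle] at htv
      rw [hm, hn0] at htv
      have : (2:ℝ) * m = 2 * n0 + 1 := by nlinarith [htv]
      have : (2*m : ℤ) = 2*n0 + 1 := by exact_mod_cast this
      omega
    · rw [min_eq_right hle] at htv
      rw [hm, hn1] at htv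
      have : (2:ℝ) * m = 2 * n1 + 1 := by nlinarith [htv]
      have : (2*m : ℤ) = 2*n1 + 1 := by exact_mod_cast this
      omega
  apply Complex.ext
  · rw [hre 1 h1, hre 0 h0]
  · exact hkk

open Complex Set Metric Finset

/-- Continuous logarithm of a nonvanishing continuous function, on the closed unit ball. -/
lemma exists_log (Φ : ℝ × ℝ → ℂ) (hc : Continuous Φ) (h0 : ∀ x, Φ x ≠ 0) :
    ∃ L : ℝ × ℝ → ℂ, (∀ x ∈ closedBall (0 : ℝ × ℝ) 1, ContinuousAt L x) ∧
      ∀ x ∈ closedBall (0 : ℝ × ℝ) 1, Complex.exp (L x) = Φ x := by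
  set B : Set (ℝ × ℝ) := closedBall 0 1 with hB
  have hBc : IsCompact B := isCompact_closedBall _ _
  have hBne : B.Nonempty := ⟨0, mem_closedBall_self zero_le_one⟩
  -- minimum modulus
  obtain ⟨x₀, hx₀B, hx₀⟩ := hBc.exists_isMinOn hBne
    ((continuous_norm.comp hc).continuousOn (s := B))
  set m : ℝ := ‖Φ x₀‖ with hm
  have hmpos : 0 < m := norm_pos_iff.mpr (h0 x₀)
  have hmle : ∀ x ∈ B, m ≤ ‖Φ x‖ := fun x hx => hx₀ hx
  -- uniform continuity
  have huc := Metric.uniformContinuousOn_iff.mp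
    (hBc.uniformContinuousOn_of_continuous hc.continuousOn)
  obtain ⟨δ, hδpos, hδ⟩ := huc m hmpos
  obtain ⟨n, hn⟩ := exists_nat_gt (1 / δ)
  have hnpos : 0 < (n : ℝ) := lt_trans (by positivity) hn
  have hn' : 1 / (n : ℝ) < δ := by
    rw [div_lt_iff₀ hnpos]
    rw [div_lt_iff₀ hδpos] at hn
    linarith [hn]
  -- scaled points stay in the ball
  have hscale : ∀ x ∈ B, ∀ c : ℝ, 0 ≤ c → c ≤ 1 → c • x ∈ B := by
    intro x hx c hc0 hc1
    rw [hB, mem_closedBall, dist_zero_right] at hx ⊢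
    rw [norm_smul, Real.norm_eq_abs, _root_.abs_of_nonneg hc0]
    calc c * ‖x‖ ≤ 1 * 1 := by
          apply mul_le_mul hc1 hx (norm_nonneg x) zero_le_one
      _ = 1 := by ring
  have hfrac : ∀ k : ℕ, k ≤ n → (0:ℝ) ≤ (k:ℝ)/n ∧ (k:ℝ)/n ≤ 1 := by
    intro k hk
    constructor
    · positivity
    · rw [div_le_one hnpos]; exact_mod_cast hk
  -- the quotient functions
  set q : ℕ → (ℝ × ℝ) → ℂ := fun k x => Φ (((k+1 : ℝ)/n) • x) / Φ (((k : ℝ)/n) • x) with hq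
  have hqcont : ∀ k, Continuous (q k) := by
    intro k
    apply Continuous.div
    · exact hc.comp (continuous_const_smul _)
    · exact hc.comp (continuous_const_smul _)
    · intro x; exact h0 _
  have hqne : ∀ k x, q k x ≠ 0 := fun k x => div_ne_zero (h0 _) (h0 _)
  have hqslit : ∀ k, k < n → ∀ x ∈ B, q k x ∈ slitPlane := by
    intro k hk x hx
    have ha : ((k+1 : ℝ)/n) • x ∈ B := by
      apply hscale x hx _ (by positivity)
      rw [div_le_one hnpos]
      have : (k:ℝ) + 1 ≤ n := by exact_mod_cast hk
      linarith
    have hb' : ((k : ℝ)/n) • x ∈ B := by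
      have := hfrac k (le_of_lt hk)
      exact hscale x hx _ this.1 this.2
    have hdist : dist (((k+1 : ℝ)/n) • x) (((k : ℝ)/n) • x) < δ := by
      rw [dist_eq_norm, ← sub_smul]
      have : ((k+1 : ℝ)/n) - ((k : ℝ)/n) = 1/n := by field_simp; ring
      rw [this, norm_smul, Real.norm_eq_abs, abs_of_pos (by positivity)]
      have hxn : ‖x‖ ≤ 1 := by rwa [hB, mem_closedBall, dist_zero_right] at hx
      calc 1/(n:ℝ) * ‖x‖ ≤ 1/n * 1 := by
            apply mul_le_mul_of_nonneg_left hxn (by positivity)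
        _ = 1/n := by ring
        _ < δ := hn'
    have hnum : ‖Φ (((k+1 : ℝ)/n) • x) - Φ (((k : ℝ)/n) • x)‖ < m := by
      have := hδ _ ha _ hb' hdist
      rwa [dist_eq_norm] at this
    have hden : m ≤ ‖Φ (((k : ℝ)/n) • x)‖ := hmle _ hb'
    have : ‖q k x - 1‖ < 1 := by
      rw [hq]
      have hd0 : Φ (((k : ℝ)/n) • x) ≠ 0 := h0 _
      rw [div_sub_one hd0, norm_div]
      rw [div_lt_one (lt_of_lt_of_le hmpos hden)]
      exact lt_of_lt_of_le hnum hden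
    have : 1 + (q k x - 1) ∈ slitPlane := Complex.mem_slitPlane_of_norm_lt_one this
    simpa using this
  -- define the logarithm
  set L : (ℝ × ℝ) → ℂ := fun x =>
    Complex.log (Φ 0) + ∑ k ∈ Finset.range n, Complex.log (q k x) with hL
  refine ⟨L, ?_, ?_⟩
  · intro x hx
    rw [hL]
    apply ContinuousAt.add continuousAt_const
    exact tendsto_finset_sum _ fun k hk =>
      ((_root_.continuousAt_clog (hqslit k (Finset.mem_range.mp hk) x hx)).comp
        (hqcont k).continuousAt)
  · intro x hx
    rw [hL, Complex.exp_add, Complex.exp_sum, Complex.exp_log (h0 0)]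
    have hexp : ∀ k ∈ Finset.range n, Complex.exp (Complex.log (q k x)) = q k x :=
      fun k _ => Complex.exp_log (hqne k x)
    rw [Finset.prod_congr rfl hexp]
    -- telescoping
    have htel : ∀ j : ℕ, j ≤ n →
        Φ 0 * ∏ k ∈ Finset.range j, q k x = Φ (((j:ℝ)/n) • x) := by
      intro j hj
      induction j with
      | zero => simp
      | succ i ih =>
        rw [Finset.prod_range_succ, ← mul_assoc, ih (le_of_lt (Nat.lt_of_succ_le hj))]
        rw [hq]
        have : Φ (((i : ℝ)/n) • x) ≠ 0 := h0 _
        field_simp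
        rw [Nat.cast_succ]
    have := htel n le_rfl
    rw [this]
    rw [div_self (ne_of_gt hnpos), one_smul]
open Complex Set Metric

/-- clamp to [0,1] -/
noncomputable def cl (t : ℝ) : ℝ := min 1 (max 0 t)

lemma cl_zero : cl 0 = 0 := by simp [cl]
lemma cl_one : cl 1 = 1 := by simp [cl]
lemma cl_nonneg (t : ℝ) : 0 ≤ cl t := le_min zero_le_one (le_max_left 0 t)
lemma cl_le_one (t : ℝ) : cl t ≤ 1 := min_le_left _ _
lemma cl_continuous : Continuous cl := continuous_const.min (continuous_const.max continuous_id)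

/-- circle parametrization -/
noncomputable def ee (s : ℝ) : ℂ := Complex.exp (((2 * Real.pi * s : ℝ) : ℂ) * I)

lemma ee_abs (s : ℝ) : ‖ee s‖ = 1 := Complex.norm_exp_ofReal_mul_I _
lemma ee_ne (s : ℝ) : ee s ≠ 0 := Complex.exp_ne_zero _
lemma ee_zero : ee 0 = 1 := by simp [ee]
lemma ee_one : ee 1 = 1 := by
  have h : ((2 * Real.pi * 1 : ℝ) : ℂ) * I = 2 * Real.pi * I := by push_cast; ring
  rw [ee, h, Complex.exp_two_pi_mul_I]
lemma ee_continuous : Continuous ee :=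
  Complex.continuous_exp.comp ((Complex.continuous_ofReal.comp (continuous_const.mul continuous_id)).mul
    continuous_const)

noncomputable def ww (x : ℝ × ℝ) : ℂ := ((cl x.1 : ℝ) : ℂ) * ee x.2

lemma ww_abs (x : ℝ × ℝ) : ‖ww x‖ = cl x.1 := by
  rw [ww]
  rw [norm_mul, ee_abs, mul_one, Complex.norm_real, Real.norm_eq_abs]
  exact _root_.abs_of_nonneg (cl_nonneg _)
lemma ww_abs_le (x : ℝ × ℝ) : ‖ww x‖ ≤ 1 := (ww_abs x) ▸ cl_le_one _
lemma ww_continuous : Continuous ww :=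
  (Complex.continuous_ofReal.comp (cl_continuous.comp continuous_fst)).mul
    (ee_continuous.comp continuous_snd)

noncomputable def Phi (g : ℂ → ℂ) (x : ℝ × ℝ) : ℂ := ww x - g (ww x)
noncomputable def Psi (g : ℂ → ℂ) (x : ℝ × ℝ) : ℂ := ee x.2 - ((cl x.1 : ℝ) : ℂ) * g (ww x)

lemma brouwer_disk (g : ℂ → ℂ) (hg : Continuous g)
    (hb : ∀ z, ‖z‖ ≤ 1 → ‖g z‖ ≤ 1) :
    ∃ z, ‖z‖ ≤ 1 ∧ g z = z := by
  by_contra hcon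
  push_neg at hcon
  have hfix : ∀ z, ‖z‖ ≤ 1 → g z ≠ z := hcon
  have hΦcont : Continuous (Phi g) := ww_continuous.sub (hg.comp ww_continuous)
  have hΨcont : Continuous (Psi g) := (ee_continuous.comp continuous_snd).sub
    ((Complex.continuous_ofReal.comp (cl_continuous.comp continuous_fst)).mul
      (hg.comp ww_continuous))
  have hΦ0 : ∀ x, Phi g x ≠ 0 := by
    intro x
    exact sub_ne_zero.mpr (Ne.symm (hfix (ww x) (ww_abs_le x)))
  have hΨ0 : ∀ x, Psi g x ≠ 0 := by
    intro x hx
    rw [Psi] at hx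
    have heq : ee x.2 = ((cl x.1 : ℝ) : ℂ) * g (ww x) := sub_eq_zero.mp hx
    have habs : (1:ℝ) = cl x.1 * ‖g (ww x)‖ := by
      have h2 := congrArg (‖·‖) heq
      rwa [ee_abs, norm_mul, Complex.norm_real, Real.norm_eq_abs, _root_.abs_of_nonneg (cl_nonneg _)] at h2
    have hgle : ‖g (ww x)‖ ≤ 1 := hb _ (ww_abs_le x)
    have hc1' : cl x.1 = 1 := by nlinarith [cl_nonneg x.1, cl_le_one x.1]
    have hwe : ww x = ee x.2 := by rw [ww, hc1']; simp
    have : ee x.2 = g (ee x.2) := by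
      calc ee x.2 = ((cl x.1 : ℝ) : ℂ) * g (ww x) := heq
        _ = g (ee x.2) := by rw [hc1', hwe]; simp
    exact hfix (ee x.2) (le_of_eq (ee_abs x.2)) this.symm
  obtain ⟨LΦ, hLΦc, hLΦe⟩ := exists_log (Phi g) hΦcont hΦ0
  obtain ⟨LΨ, hLΨc, hLΨe⟩ := exists_log (Psi g) hΨcont hΨ0
  have hmemB : ∀ a b : ℝ, a ∈ Icc (0:ℝ) 1 → b ∈ Icc (0:ℝ) 1 →
      ((a, b) : ℝ × ℝ) ∈ closedBall (0 : ℝ × ℝ) 1 := by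
    intro a b ha hb'
    rw [mem_closedBall, Prod.dist_eq]
    apply max_le
    · simp only [Real.dist_eq, Prod.fst_zero, sub_zero]
      rw [abs_le]; exact ⟨by linarith [ha.1], ha.2⟩
    · simp only [Real.dist_eq, Prod.snd_zero, sub_zero]
      rw [abs_le]; exact ⟨by linarith [hb'.1], hb'.2⟩
  have h0I : (0:ℝ) ∈ Icc (0:ℝ) 1 := ⟨le_refl 0, zero_le_one⟩
  have h1I : (1:ℝ) ∈ Icc (0:ℝ) 1 := ⟨zero_le_one, le_refl 1⟩
  have hcont1 : ∀ (L : ℝ × ℝ → ℂ), (∀ x ∈ closedBall (0 : ℝ × ℝ) 1, ContinuousAt L x) →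
      ∀ b ∈ Icc (0:ℝ) 1, ContinuousOn (fun t => L (t, b)) (Icc (0:ℝ) 1) := by
    intro L hL b hbI t htI
    have h1 : ContinuousAt (fun t : ℝ => ((t, b) : ℝ × ℝ)) t := by fun_prop
    exact (ContinuousAt.comp (x := t) (f := fun t : ℝ => ((t, b) : ℝ × ℝ))
      (hL (t, b) (hmemB t b htI hbI)) h1).continuousWithinAt
  have hcont2 : ∀ (L : ℝ × ℝ → ℂ), (∀ x ∈ closedBall (0 : ℝ × ℝ) 1, ContinuousAt L x) →
      ∀ a ∈ Icc (0:ℝ) 1, ContinuousOn (fun s => L (a, s)) (Icc (0:ℝ) 1) := by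
    intro L hL a haI s hsI
    have h1 : ContinuousAt (fun s : ℝ => ((a, s) : ℝ × ℝ)) s := by fun_prop
    exact (ContinuousAt.comp (x := s) (f := fun s : ℝ => ((a, s) : ℝ × ℝ))
      (hL (a, s) (hmemB a s haI hsI)) h1).continuousWithinAt
  have hΦtop : ∀ t, Phi g (t, 1) = Phi g (t, 0) := by
    intro t; simp [Phi, ww, ee_zero, ee_one]
  have hΨtop : ∀ t, Psi g (t, 1) = Psi g (t, 0) := by
    intro t; simp [Psi, ww, ee_zero, ee_one]
  have hΦ0s : ∀ s : ℝ, Phi g (0, s) = Phi g (0, 0) := by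
    intro s; simp [Phi, ww, cl_zero]
  have hΨ0s : ∀ s : ℝ, Psi g (0, s) = ee s := by
    intro s; simp [Psi, cl_zero]
  have hΦΨ1 : ∀ s : ℝ, Phi g (1, s) = Psi g (1, s) := by
    intro s; simp [Phi, Psi, ww, cl_one]
  have hu1 : LΦ (1, 1) - LΦ (1, 0) = LΦ (0, 1) - LΦ (0, 0) := by
    apply exp_eq_one_const (u := fun t => LΦ (t, 1) - LΦ (t, 0))
    · exact (hcont1 LΦ hLΦc 1 h1I).sub (hcont1 LΦ hLΦc 0 h0I)
    · intro t htI
      rw [Complex.exp_sub, hLΦe _ (hmemB t 1 htI h1I), hLΦe _ (hmemB t 0 htI h0I),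
        hΦtop t, div_self (hΦ0 _)]
  have hu2 : LΦ (0, 1) - LΦ (0, 0) = LΦ (0, 0) - LΦ (0, 0) := by
    apply exp_eq_one_const (u := fun s => LΦ (0, s) - LΦ (0, 0))
    · exact (hcont2 LΦ hLΦc 0 h0I).sub continuousOn_const
    · intro s hsI
      rw [Complex.exp_sub, hLΦe _ (hmemB 0 s h0I hsI), hLΦe _ (hmemB 0 0 h0I h0I),
        hΦ0s s, div_self (hΦ0 _)]
  have hu3 : LΨ (0, 1) - LΨ (0, 0) - ((2 * Real.pi * 1 : ℝ) : ℂ) * I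
      = LΨ (0, 0) - LΨ (0, 0) - ((2 * Real.pi * 0 : ℝ) : ℂ) * I := by
    apply exp_eq_one_const
      (u := fun s => LΨ (0, s) - LΨ (0, 0) - ((2 * Real.pi * s : ℝ) : ℂ) * I)
    · apply ContinuousOn.sub
      · exact (hcont2 LΨ hLΨc 0 h0I).sub continuousOn_const
      · apply Continuous.continuousOn
        exact (Complex.continuous_ofReal.comp (continuous_const.mul continuous_id)).mul continuous_const
    · intro s hsI
      rw [Complex.exp_sub, Complex.exp_sub, hLΨe _ (hmemB 0 s h0I hsI),
        hLΨe _ (hmemB 0 0 h0I h0I), hΨ0s s, hΨ0s 0, ee_zero]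
      have h5 : Complex.exp (((2 * Real.pi * s : ℝ) : ℂ) * I) = ee s := rfl
      rw [h5, div_one, div_self (ee_ne s)]
  have hu4 : LΦ (1, 1) - LΨ (1, 1) = LΦ (1, 0) - LΨ (1, 0) := by
    apply exp_eq_one_const (u := fun s => LΦ (1, s) - LΨ (1, s))
    · exact (hcont2 LΦ hLΦc 1 h1I).sub (hcont2 LΨ hLΨc 1 h1I)
    · intro s hsI
      rw [Complex.exp_sub, hLΦe _ (hmemB 1 s h1I hsI), hLΨe _ (hmemB 1 s h1I hsI),
        hΦΨ1 s, div_self (hΨ0 _)]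
  have hu5 : LΨ (1, 1) - LΨ (1, 0) = LΨ (0, 1) - LΨ (0, 0) := by
    apply exp_eq_one_const (u := fun t => LΨ (t, 1) - LΨ (t, 0))
    · exact (hcont1 LΨ hLΨc 1 h1I).sub (hcont1 LΨ hLΨc 0 h0I)
    · intro t htI
      rw [Complex.exp_sub, hLΨe _ (hmemB t 1 htI h1I), hLΨe _ (hmemB t 0 htI h0I),
        hΨtop t, div_self (hΨ0 _)]
  have hfinal : ((2 * Real.pi * 1 : ℝ) : ℂ) * I = 0 := by
    have h3 : LΨ (0, 1) - LΨ (0, 0) = ((2 * Real.pi * 1 : ℝ) : ℂ) * I := by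
      have h6 := hu3
      push_cast at h6 ⊢
      linear_combination h6
    push_cast
    push_cast at hu1 hu2 hu4 hu5 h3
    linear_combination hu1 + hu2 - hu4 - hu5 - h3
  have hpi : (2 * Real.pi * 1 : ℝ) = 0 := by
    by_contra hne
    have h7 : ((2 * Real.pi * 1 : ℝ) : ℂ) ≠ 0 := by exact_mod_cast hne
    exact (mul_ne_zero h7 Complex.I_ne_zero) hfinal
  nlinarith [Real.pi_pos]
open Complex Set Metric

/-- radial map from the sup-norm plane to `ℂ` (Euclidean), sending the unit square
onto the unit disk -/
noncomputable def AA (x : ℝ × ℝ) : ℂ :=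
  (‖x‖ / ‖(Complex.equivRealProdCLM.symm x : ℂ)‖) • (Complex.equivRealProdCLM.symm x : ℂ)

noncomputable def BB (z : ℂ) : ℝ × ℝ :=
  (‖z‖ / ‖(Complex.equivRealProdCLM z : ℝ × ℝ)‖) • (Complex.equivRealProdCLM z : ℝ × ℝ)

lemma AA_zero : AA 0 = 0 := by simp [AA]
lemma BB_zero : BB 0 = 0 := by simp [BB]

lemma Jsymm_ne {x : ℝ × ℝ} (hx : x ≠ 0) : (Complex.equivRealProdCLM.symm x : ℂ) ≠ 0 := by
  intro h
  apply hx
  have h2 := congrArg (Complex.equivRealProdCLM : ℂ → ℝ × ℝ) h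
  rw [ContinuousLinearEquiv.apply_symm_apply, map_zero] at h2
  exact h2

lemma J_ne {z : ℂ} (hz : z ≠ 0) : (Complex.equivRealProdCLM z : ℝ × ℝ) ≠ 0 := by
  intro h
  apply hz
  have h2 := congrArg (Complex.equivRealProdCLM.symm : ℝ × ℝ → ℂ) h
  rw [ContinuousLinearEquiv.symm_apply_apply, map_zero] at h2
  exact h2

lemma AA_norm (x : ℝ × ℝ) : ‖AA x‖ = ‖x‖ := by
  rcases eq_or_ne x 0 with rfl | hx
  · simp [AA]
  · have hv : (Complex.equivRealProdCLM.symm x : ℂ) ≠ 0 := Jsymm_ne hx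
    have hvn : ‖(Complex.equivRealProdCLM.symm x : ℂ)‖ ≠ 0 := norm_ne_zero_iff.mpr hv
    rw [AA, norm_smul, Real.norm_eq_abs, _root_.abs_of_nonneg (by positivity), div_mul_cancel₀ _ hvn]

lemma BB_norm (z : ℂ) : ‖BB z‖ = ‖z‖ := by
  rcases eq_or_ne z 0 with rfl | hz
  · simp [BB]
  · have hv : (Complex.equivRealProdCLM z : ℝ × ℝ) ≠ 0 := J_ne hz
    have hvn : ‖(Complex.equivRealProdCLM z : ℝ × ℝ)‖ ≠ 0 := norm_ne_zero_iff.mpr hv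
    rw [BB, norm_smul, Real.norm_eq_abs, _root_.abs_of_nonneg (by positivity), div_mul_cancel₀ _ hvn]

lemma AA_ne {x : ℝ × ℝ} (hx : x ≠ 0) : AA x ≠ 0 := by
  intro h
  apply hx
  have := congrArg (‖·‖) h
  simp only [AA_norm, norm_zero] at this
  exact norm_eq_zero.mp this

lemma BB_AA (x : ℝ × ℝ) : BB (AA x) = x := by
  rcases eq_or_ne x 0 with rfl | hx
  · rw [AA_zero, BB_zero]
  · have hv : (Complex.equivRealProdCLM.symm x : ℂ) ≠ 0 := Jsymm_ne hx
    have hvn : (0:ℝ) < ‖(Complex.equivRealProdCLM.symm x : ℂ)‖ := norm_pos_iff.mpr hv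
    have hxn : (0:ℝ) < ‖x‖ := norm_pos_iff.mpr hx
    set r : ℝ := ‖x‖ / ‖(Complex.equivRealProdCLM.symm x : ℂ)‖ with hr
    have hrpos : 0 < r := div_pos hxn hvn
    have hJA : (Complex.equivRealProdCLM (AA x) : ℝ × ℝ) = r • x := by
      rw [AA, ← hr, map_smul, ContinuousLinearEquiv.apply_symm_apply]
    rw [BB, hJA, AA_norm, norm_smul, Real.norm_eq_abs, abs_of_pos hrpos, smul_smul]
    have hgen : ∀ a b : ℝ, 0 < a → 0 < b → a / (b * a) * b = 1 := by
      intro a b ha hb; field_simp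
    have hcoef : ‖x‖ / (r * ‖x‖) * r = 1 := hgen _ _ hxn hrpos
    rw [hcoef, one_smul]

lemma AA_BB (z : ℂ) : AA (BB z) = z := by
  rcases eq_or_ne z 0 with rfl | hz
  · rw [BB_zero, AA_zero]
  · have hv : (Complex.equivRealProdCLM z : ℝ × ℝ) ≠ 0 := J_ne hz
    have hvn : (0:ℝ) < ‖(Complex.equivRealProdCLM z : ℝ × ℝ)‖ := norm_pos_iff.mpr hv
    have hzn : (0:ℝ) < ‖z‖ := norm_pos_iff.mpr hz
    set r : ℝ := ‖z‖ / ‖(Complex.equivRealProdCLM z : ℝ × ℝ)‖ with hr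
    have hrpos : 0 < r := div_pos hzn hvn
    have hJB : (Complex.equivRealProdCLM.symm (BB z) : ℂ) = r • z := by
      rw [BB, ← hr, map_smul, ContinuousLinearEquiv.symm_apply_apply]
    rw [AA, hJB, BB_norm, norm_smul, Real.norm_eq_abs, abs_of_pos hrpos, smul_smul]
    have hgen : ∀ a b : ℝ, 0 < a → 0 < b → a / (b * a) * b = 1 := by
      intro a b ha hb; field_simp
    have hcoef : ‖z‖ / (r * ‖z‖) * r = 1 := hgen _ _ hzn hrpos
    rw [hcoef, one_smul]

lemma AA_continuous : Continuous AA := by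
  rw [continuous_iff_continuousAt]
  intro x
  rcases eq_or_ne x 0 with rfl | hx
  · rw [ContinuousAt, AA_zero, tendsto_zero_iff_norm_tendsto_zero]
    simp only [AA_norm]
    exact continuous_norm.tendsto' 0 0 norm_zero
  · have hv : (Complex.equivRealProdCLM.symm x : ℂ) ≠ 0 := Jsymm_ne hx
    apply ContinuousAt.fun_smul
    · apply ContinuousAt.div
      · exact continuous_norm.continuousAt
      · exact (continuous_norm.comp Complex.equivRealProdCLM.symm.continuous).continuousAt
      · exact norm_ne_zero_iff.mpr hv
    · exact Complex.equivRealProdCLM.symm.continuous.continuousAt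

lemma BB_continuous : Continuous BB := by
  rw [continuous_iff_continuousAt]
  intro z
  rcases eq_or_ne z 0 with rfl | hz
  · rw [ContinuousAt, BB_zero, tendsto_zero_iff_norm_tendsto_zero]
    simp only [BB_norm]
    exact continuous_norm.tendsto' 0 0 norm_zero
  · have hv : (Complex.equivRealProdCLM z : ℝ × ℝ) ≠ 0 := J_ne hz
    apply ContinuousAt.fun_smul
    · apply ContinuousAt.div
      · exact continuous_norm.continuousAt
      · exact (continuous_norm.comp Complex.equivRealProdCLM.continuous).continuousAt
      · exact norm_ne_zero_iff.mpr hv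
    · exact Complex.equivRealProdCLM.continuous.continuousAt

/-- retraction of the plane onto the (sup-norm) unit ball -/
noncomputable def qq (x : ℝ × ℝ) : ℝ × ℝ := (max 1 ‖x‖)⁻¹ • x

lemma qq_norm_le (x : ℝ × ℝ) : ‖qq x‖ ≤ 1 := by
  have h1 : (0:ℝ) < max 1 ‖x‖ := lt_of_lt_of_le zero_lt_one (le_max_left _ _)
  rw [qq, norm_smul, Real.norm_eq_abs, abs_of_pos (by positivity)]
  rw [inv_mul_le_iff₀ h1, mul_one]
  exact le_max_right _ _

lemma qq_mem (x : ℝ × ℝ) : qq x ∈ closedBall (0 : ℝ × ℝ) 1 := by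
  rw [mem_closedBall, dist_zero_right]; exact qq_norm_le x

lemma qq_of_le {x : ℝ × ℝ} (hx : ‖x‖ ≤ 1) : qq x = x := by
  rw [qq, max_eq_left hx, inv_one, one_smul]

lemma qq_continuous : Continuous qq := by
  apply Continuous.fun_smul
  · apply Continuous.inv₀ (continuous_const.max continuous_norm)
    intro x
    exact ne_of_gt (lt_of_lt_of_le zero_lt_one (le_max_left _ _))
  · exact continuous_id

/-- Brouwer fixed point property for topological disks in the plane. -/
lemma fixed_in_D (D : Set (ℝ × ℝ))
    (hD : Nonempty ((Metric.closedBall (0 : ℝ × ℝ) 1 : Set (ℝ × ℝ)) ≃ₜ D))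
    (G : ℝ × ℝ → ℝ × ℝ) (hG : Continuous G) (hGD : ∀ x ∈ D, G x ∈ D) :
    ∃ x ∈ D, G x = x := by
  obtain ⟨φ⟩ := hD
  set gS : (Metric.closedBall (0 : ℝ × ℝ) 1 : Set (ℝ × ℝ)) →
      (Metric.closedBall (0 : ℝ × ℝ) 1 : Set (ℝ × ℝ)) :=
    fun y => φ.symm ⟨G (φ y), hGD _ (φ y).2⟩ with hgS
  have hgScont : Continuous gS := by
    apply φ.symm.continuous.comp
    exact (hG.comp (continuous_subtype_val.comp φ.continuous)).subtype_mk _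
  set g' : ℝ × ℝ → ℝ × ℝ := fun x => (gS ⟨qq x, qq_mem x⟩ : ℝ × ℝ) with hg'
  have hg'cont : Continuous g' :=
    continuous_subtype_val.comp (hgScont.comp (qq_continuous.subtype_mk _))
  have hg'le : ∀ x, ‖g' x‖ ≤ 1 := by
    intro x
    have h9 := (gS ⟨qq x, qq_mem x⟩).2
    rw [mem_closedBall, dist_zero_right] at h9
    exact h9
  set g'' : ℂ → ℂ := fun z => AA (g' (BB z)) with hg''
  have hg''cont : Continuous g'' := AA_continuous.comp (hg'cont.comp BB_continuous)
  have hg''le : ∀ z, ‖g'' z‖ ≤ 1 := by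
    intro z
    rw [hg'']
    show ‖AA (g' (BB z))‖ ≤ 1
    rw [AA_norm]
    exact hg'le _
  obtain ⟨z₀, hz₀, hfz₀⟩ := brouwer_disk g'' hg''cont (fun z _ => hg''le z)
  set x₀ : ℝ × ℝ := BB z₀ with hx₀
  have hx₀n : ‖x₀‖ ≤ 1 := by rw [hx₀, BB_norm]; exact hz₀
  have hfix' : g' x₀ = x₀ := by
    have h1 := congrArg BB hfz₀
    have h2 : BB (g'' z₀) = g' x₀ := by
      show BB (AA (g' (BB z₀))) = g' (BB z₀)
      exact BB_AA _
    rw [h2] at h1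
    exact h1
  have hq : qq x₀ = x₀ := qq_of_le hx₀n
  have hmem : x₀ ∈ Metric.closedBall (0 : ℝ × ℝ) 1 := by
    rw [mem_closedBall, dist_zero_right]; exact hx₀n
  have h8 : (gS ⟨qq x₀, qq_mem x₀⟩ : ℝ × ℝ) = x₀ := hfix'
  have harg : (⟨qq x₀, qq_mem x₀⟩ : (Metric.closedBall (0 : ℝ × ℝ) 1 : Set (ℝ × ℝ)))
      = ⟨x₀, hmem⟩ := Subtype.ext hq
  rw [harg] at h8
  have hfixS : gS ⟨x₀, hmem⟩ = ⟨x₀, hmem⟩ := Subtype.ext h8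
  have hfixD : φ (gS ⟨x₀, hmem⟩) = φ ⟨x₀, hmem⟩ := congrArg φ hfixS
  rw [hgS] at hfixD
  simp only [Homeomorph.apply_symm_apply] at hfixD
  refine ⟨(φ ⟨x₀, hmem⟩ : ℝ × ℝ), (φ ⟨x₀, hmem⟩).2, ?_⟩
  exact congrArg Subtype.val hfixD
open Filter Topology

/-- The 2-torus as a product of two circles. -/
abbrev T2 := UnitAddCircle × UnitAddCircle

/-- The canonical projection `ℝ² → T²`. -/
noncomputable def pr : ℝ × ℝ → T2 := fun z => ((z.1 : UnitAddCircle), (z.2 : UnitAddCircle))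

lemma pr_add (z : ℝ × ℝ) (p q : ℤ) : pr (z + ((p : ℝ), (q : ℝ))) = pr z := by
  have key : ∀ (x : ℝ) (m : ℤ), ((x + m : ℝ) : AddCircle (1:ℝ)) = (x : AddCircle (1:ℝ)) := by
    intro x m
    have h : ((m:ℝ) : AddCircle (1:ℝ)) = 0 := by simp [AddCircle.coe_eq_zero_iff]
    have h2 : ((x + m : ℝ) : AddCircle (1:ℝ)) =
        (x : AddCircle (1:ℝ)) + ((m:ℝ) : AddCircle (1:ℝ)) := rfl
    rw [h2, h, add_zero]
  have h1 : (z + ((p : ℝ), (q : ℝ))).1 = z.1 + (p:ℝ) := rfl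
  have h2 : (z + ((p : ℝ), (q : ℝ))).2 = z.2 + (q:ℝ) := rfl
  rw [pr, pr]
  simp only [h1, h2]
  rw [key z.1 p, key z.2 q]

lemma pr_iterate (f : T2 ≃ₜ T2) (F : (ℝ × ℝ) ≃ₜ (ℝ × ℝ))
    (hlift : ∀ z : ℝ × ℝ, pr (F z) = f (pr z)) (n : ℕ) (z : ℝ × ℝ) :
    pr ((⇑F)^[n] z) = (⇑f)^[n] (pr z) := by
  induction n with
  | zero => simp
  | succ m ih =>
    rw [Function.iterate_succ_apply', Function.iterate_succ_apply', hlift, ih]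

lemma no_fp_pos (f : T2 ≃ₜ T2) (F : (ℝ × ℝ) ≃ₜ (ℝ × ℝ))
    (hlift : ∀ z : ℝ × ℝ, pr (F z) = f (pr z))
    (hper : ∀ (z : T2) (n : ℕ), 0 < n → (⇑f)^[n] z ≠ z)
    (n : ℕ) (hn : 0 < n) (p q : ℤ) (z : ℝ × ℝ)
    (h : (⇑F)^[n] z = z + ((p : ℝ), (q : ℝ))) : False := by
  have : (⇑f)^[n] (pr z) = pr z := by
    rw [← pr_iterate f F hlift, h, pr_add]
  exact hper (pr z) n hn this

lemma no_fp_neg (f : T2 ≃ₜ T2) (F : (ℝ × ℝ) ≃ₜ (ℝ × ℝ))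
    (hlift : ∀ z : ℝ × ℝ, pr (F z) = f (pr z))
    (hper : ∀ (z : T2) (n : ℕ), 0 < n → (⇑f)^[n] z ≠ z)
    (n : ℕ) (hn : 0 < n) (p q : ℤ) (z : ℝ × ℝ)
    (h : (⇑F.symm)^[n] z = z + ((p : ℝ), (q : ℝ))) : False := by
  have hLI : Function.LeftInverse ⇑F ⇑F.symm := F.apply_symm_apply
  have h2 : z = (⇑F)^[n] (z + ((p : ℝ), (q : ℝ))) := by
    rw [← h, hLI.iterate n _]
  have h3 : pr z = (⇑f)^[n] (pr z) := by
    conv_lhs => rw [h2]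
    rw [pr_iterate f F hlift, pr_add]
  exact hper (pr z) n hn h3.symm

/-- Main auxiliary result: an `F` compressing `D` into a translate (or vice versa)
would give a fixed point via Brouwer. -/
lemma main_aux (D : Set (ℝ × ℝ))
    (hD : Nonempty ((Metric.closedBall (0 : ℝ × ℝ) 1 : Set (ℝ × ℝ)) ≃ₜ D))
    (v : ℝ × ℝ) (H H' : ℝ × ℝ → ℝ × ℝ) (hHc : Continuous H) (hH'c : Continuous H')
    (hinv1 : ∀ z, H' (H z) = z) (hinv2 : ∀ z, H (H' z) = z)
    (hnofix : ∀ z, H z ≠ z + v) :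
    ¬ (H '' D ⊆ (fun z : ℝ × ℝ => z + v) '' D) ∧
    ¬ ((fun z : ℝ × ℝ => z + v) '' D ⊆ H '' D) := by
  constructor
  · intro hsub
    have hmaps : ∀ x ∈ D, H x - v ∈ D := by
      intro x hx
      obtain ⟨y, hy, hyeq⟩ := hsub ⟨x, hx, rfl⟩
      have : H x - v = y := by rw [← hyeq]; simp
      rwa [this]
    obtain ⟨z, hz, hfz⟩ := fixed_in_D D hD (fun x => H x - v)
      (hHc.sub continuous_const) hmaps
    exact hnofix z (sub_eq_iff_eq_add.mp hfz)
  · intro hsub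
    have hmaps : ∀ x ∈ D, H' (x + v) ∈ D := by
      intro x hx
      obtain ⟨y, hy, hyeq⟩ := hsub ⟨x, hx, rfl⟩
      have hxv : x + v = H y := hyeq.symm
      have : H' (x + v) = y := by rw [hxv, hinv1]
      rwa [this]
    obtain ⟨z, hz, hfz⟩ := fixed_in_D D hD (fun x => H' (x + v))
      (hH'c.comp (continuous_id.add continuous_const)) hmaps
    apply hnofix z
    have h6 := congrArg H hfz
    rw [hinv2] at h6
    exact h6.symm

/-- If `f` is a torus homeomorphism isotopic to the identity (its lift `F`
commutes with integer translations) without periodic points, then for any closed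
topological disk `D ⊆ ℝ²`, any `N ≠ 0` and any integer translation `T_{p,q}`,
neither `F^N(D) ⊆ T_{p,q}(D)` nor `T_{p,q}(D) ⊆ F^N(D)`. -/
theorem stmt1 (f : T2 ≃ₜ T2) (F : (ℝ × ℝ) ≃ₜ (ℝ × ℝ))
    (hlift : ∀ z : ℝ × ℝ, pr (F z) = f (pr z))
    (hdeg : ∀ (z : ℝ × ℝ) (v : ℤ × ℤ),
      F (z + ((v.1 : ℝ), (v.2 : ℝ))) = F z + ((v.1 : ℝ), (v.2 : ℝ)))
    (hper : ∀ (z : T2) (n : ℕ), 0 < n → (⇑f)^[n] z ≠ z)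
    (D : Set (ℝ × ℝ))
    (hD : Nonempty ((Metric.closedBall (0 : ℝ × ℝ) 1 : Set (ℝ × ℝ)) ≃ₜ D)) :
    ∀ N : ℤ, N ≠ 0 → ∀ p q : ℤ,
      ¬ ((F.toEquiv ^ N) '' D ⊆ (fun z : ℝ × ℝ => z + ((p : ℝ), (q : ℝ))) '' D) ∧
      ¬ ((fun z : ℝ × ℝ => z + ((p : ℝ), (q : ℝ))) '' D ⊆ (F.toEquiv ^ N) '' D) := by
  intro N hN p q
  set n : ℕ := N.natAbs with hn
  have hnpos : 0 < n := Int.natAbs_pos.mpr hN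
  have hFcont : Continuous ((⇑F)^[n]) := F.continuous.iterate n
  have hFscont : Continuous ((⇑F.symm)^[n]) := F.symm.continuous.iterate n
  have hLI : Function.LeftInverse ⇑F ⇑F.symm := F.apply_symm_apply
  have hRI : Function.LeftInverse ⇑F.symm ⇑F := F.symm_apply_apply
  have hpos_coe : ∀ m : ℕ, ⇑(F.toEquiv ^ (m : ℤ)) = (⇑F)^[m] := by
    intro m
    rw [zpow_natCast]
    exact (Equiv.Perm.iterate_eq_pow F.toEquiv m).symm
  have hneg_coe : ∀ m : ℕ, ⇑(F.toEquiv ^ (-(m : ℤ))) = (⇑F.symm)^[m] := by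
    intro m
    rw [zpow_neg, zpow_natCast, ← inv_pow]
    have h : (F.toEquiv)⁻¹ = F.symm.toEquiv := rfl
    rw [h]
    exact (Equiv.Perm.iterate_eq_pow F.symm.toEquiv m).symm
  rcases hN.lt_or_gt with hNneg | hNpos
  · -- N < 0 : F^N acts as F.symm iterated
    have hNeq : N = -(n : ℤ) := by rw [hn]; omega
    have hcoe : ⇑(F.toEquiv ^ N) = (⇑F.symm)^[n] := by rw [hNeq]; exact hneg_coe n
    have himg : (F.toEquiv ^ N) '' D = (⇑F.symm)^[n] '' D := by rw [hcoe]
    rw [himg]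
    exact main_aux D hD ((p : ℝ), (q : ℝ)) ((⇑F.symm)^[n]) ((⇑F)^[n]) hFscont hFcont
      (fun z => hLI.iterate n z) (fun z => (hRI.iterate n) z)
      (fun z h => no_fp_neg f F hlift hper n hnpos p q z h)
  · -- N > 0 : F^N acts as F iterated
    have hNeq : N = (n : ℤ) := by rw [hn]; omega
    have hcoe : ⇑(F.toEquiv ^ N) = (⇑F)^[n] := by rw [hNeq]; exact hpos_coe n
    have himg : (F.toEquiv ^ N) '' D = (⇑F)^[n] '' D := by rw [hcoe]
    rw [himg]
    exact main_aux D hD ((p : ℝ), (q : ℝ)) ((⇑F)^[n]) ((⇑F.symm)^[n]) hFcont hFscont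
      (fun z => hRI.iterate n z) (fun z => (hLI.iterate n) z)
      (fun z h => no_fp_pos f F hlift hper n hnpos p q z h)
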